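/- arXiv:2603.23106 — 2 statements merged into one kernel-verified Lean document; each statement's English description precedes it below -/
import Mathlib

section
/- For each Bernoulli factor, the modulus of its characteristic function admits a Gaussian-type bound on the central lobe: for p \in [0,1], w > 0, and |\omega| \le \pi/w, one has |(1-p) + p e^{i\omega w}| \le exp(-(2/\pi^2) p(1-p) w^2 \omega^2). -/
/-- Gaussian-type bound for the modulus of a Bernoulli characteristic function
on the central lobe: for `p ∈ [0,1]`, `w > 0` and `|ω| ≤ π/w`,
`|(1-p) + p e^{iωw}| ≤ exp(-(2/π²) p(1-p) w² ω²)`. -/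
theorem bernoulli_charFun_gaussian_bound (p w ω : ℝ)
    (hp0 : 0 ≤ p) (hp1 : p ≤ 1) (hw : 0 < w)
    (hω : |ω| ≤ Real.pi / w) :
    ‖(1 - p : ℂ) + p * Complex.exp (Complex.I * ω * w)‖
      ≤ Real.exp (-(2 / Real.pi ^ 2) * (p * (1 - p)) * w ^ 2 * ω ^ 2) := by
  set θ : ℝ := ω * w with hθ
  have hθabs : |θ| ≤ Real.pi := by
    rw [hθ, abs_mul, abs_of_pos hw]
    calc |ω| * w ≤ (Real.pi / w) * w := by
          exact mul_le_mul_of_nonneg_right hω hw.le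
      _ = Real.pi := by field_simp
  -- rewrite the complex expression
  have hA : ((1 - p : ℂ) + p * Complex.exp (Complex.I * ω * w))
      = Complex.mk (1 - p + p * Real.cos θ) (p * Real.sin θ) := by
    have : Complex.I * (ω : ℂ) * (w : ℂ) = (θ : ℂ) * Complex.I := by
      push_cast [hθ]; ring
    rw [this, Complex.exp_mul_I]
    apply Complex.ext <;> simp [Complex.cos_ofReal_re, Complex.sin_ofReal_re]
  have habs2 : ‖(1 - p : ℂ) + p * Complex.exp (Complex.I * ω * w)‖ ^ 2
      = 1 - 2 * (p * (1 - p)) * (1 - Real.cos θ) := by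
    rw [hA, Complex.sq_norm, Complex.normSq_mk]
    have hsc := Real.sin_sq_add_cos_sq θ
    linear_combination (p ^ 2) * hsc
  set c : ℝ := p * (1 - p) with hc
  have hc0 : 0 ≤ c := mul_nonneg hp0 (by linarith)
  have hu0 : 0 ≤ 1 - Real.cos θ := by linarith [Real.cos_le_one θ]
  -- step 1: abs ≤ exp (-c * (1 - cos θ))
  have step1 : ‖(1 - p : ℂ) + p * Complex.exp (Complex.I * ω * w)‖
      ≤ Real.exp (-(c * (1 - Real.cos θ))) := by
    have hsq : ‖(1 - p : ℂ) + p * Complex.exp (Complex.I * ω * w)‖ ^ 2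
        ≤ Real.exp (-(c * (1 - Real.cos θ))) ^ 2 := by
      rw [habs2, sq, ← Real.exp_add]
      have h := Real.add_one_le_exp (-(c * (1 - Real.cos θ)) + -(c * (1 - Real.cos θ)))
      linarith
    nlinarith [hsq, norm_nonneg ((1 - p : ℂ) + p * Complex.exp (Complex.I * ω * w)),
      Real.exp_pos (-(c * (1 - Real.cos θ)))]
  -- step 2: exp monotone with the cos bound
  refine step1.trans (Real.exp_le_exp.mpr ?_)
  have hcos := Real.cos_le_one_sub_mul_cos_sq hθabs
  have hlin : 2 / Real.pi ^ 2 * θ ^ 2 ≤ 1 - Real.cos θ := by linarith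
  have hgoal : c * (2 / Real.pi ^ 2 * θ ^ 2) ≤ c * (1 - Real.cos θ) :=
    mul_le_mul_of_nonneg_left hlin hc0
  have heq : -(2 / Real.pi ^ 2) * c * w ^ 2 * ω ^ 2
      = -(c * (2 / Real.pi ^ 2 * θ ^ 2)) := by rw [hθ]; ring
  rw [heq]
  linarith
end

section
/- The weighted Poisson-binomial characteristic function modulus is bounded by a Gaussian envelope on the common central lobe: for independent Bernoulli(p_d) variables with weights w_d > 0, and for |\omega| \le \pi / max_d w_d, one has |\phi_{WPB}(\omega)| \le exp(-(2\sigma^2/\pi^2)\omega^2) where \sigma^2 = \sum_{d=1}^D p_d(1-p_d) w_d^2 is the variance of the sum. -/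
/-- Per-factor bound. -/
lemma wpb_factor_bound (p θ : ℝ) (hp0 : 0 ≤ p) (hp1 : p ≤ 1) (hθ : |θ| ≤ Real.pi) :
    ‖(1 - p : ℂ) + p * Complex.exp (Complex.I * θ)‖
      ≤ Real.exp (-(2 * (p * (1 - p)) / Real.pi ^ 2) * θ ^ 2) := by
  have hpi := Real.pi_pos
  have hsq : ‖(1 - p : ℂ) + p * Complex.exp (Complex.I * θ)‖ ^ 2
      = 1 - 2 * (p * (1 - p)) * (1 - Real.cos θ) := by
    rw [← Complex.normSq_eq_norm_sq]
    rw [mul_comm Complex.I (θ:ℂ), Complex.exp_mul_I]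
    simp [Complex.normSq_apply, Complex.add_re, Complex.add_im, Complex.cos_ofReal_re,
      Complex.sin_ofReal_re]
    have := Real.sin_sq_add_cos_sq θ
    ring_nf
    nlinarith [Real.sin_sq_add_cos_sq θ]
  have hcos : Real.cos θ ≤ 1 - 2 / Real.pi ^ 2 * θ ^ 2 :=
    Real.cos_le_one_sub_mul_cos_sq hθ
  set x := 2 * (p * (1 - p)) * (1 - Real.cos θ) with hx
  have hxnn : 0 ≤ x := by
    nlinarith [Real.cos_le_one θ, mul_nonneg hp0 (sub_nonneg.2 hp1)]
  have h1 : (1 : ℝ) - x ≤ Real.exp (-x) := by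
    have := Real.add_one_le_exp (-x); linarith
  have h2 : -x ≤ 2 * (-(2 * (p * (1 - p)) / Real.pi ^ 2) * θ ^ 2) := by
    rw [hx]
    have hpp : 0 ≤ p * (1 - p) := mul_nonneg hp0 (by linarith)
    have key : 2 / Real.pi ^ 2 * θ ^ 2 ≤ 1 - Real.cos θ := by linarith
    have h3 := mul_le_mul_of_nonneg_left key (by positivity : (0:ℝ) ≤ 2 * (p * (1 - p)))
    ring_nf at h3 ⊢
    linarith
  have hchain : ‖(1 - p : ℂ) + p * Complex.exp (Complex.I * θ)‖ ^ 2
      ≤ Real.exp (-(2 * (p * (1 - p)) / Real.pi ^ 2) * θ ^ 2) ^ 2 := by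
    rw [hsq, ← Real.exp_nat_mul]
    calc 1 - x ≤ Real.exp (-x) := h1
      _ ≤ Real.exp ((2:ℕ) * (-(2 * (p * (1 - p)) / Real.pi ^ 2) * θ ^ 2)) := by
          apply Real.exp_le_exp.mpr; push_cast; linarith
  have habs := norm_nonneg ((1 - p : ℂ) + p * Complex.exp (Complex.I * θ))
  have hexp := Real.exp_pos (-(2 * (p * (1 - p)) / Real.pi ^ 2) * θ ^ 2)
  nlinarith

/-- Gaussian envelope bound for the weighted Poisson–binomial characteristic
function on the common central lobe `|ω| ≤ π / max_d w_d`: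
`|φ_WPB(ω)| ≤ exp(-(2σ²/π²) ω²)` with `σ² = ∑_d p_d(1-p_d) w_d²`. -/
theorem wpb_charFun_gaussian_envelope (D : ℕ) (hD : 0 < D)
    (p w : Fin D → ℝ) (hp0 : ∀ d, 0 ≤ p d) (hp1 : ∀ d, p d ≤ 1)
    (hw : ∀ d, 0 < w d) (ω : ℝ)
    (hω : |ω| ≤ Real.pi / (Finset.univ.sup' (Finset.univ_nonempty_iff.mpr
            (Fin.pos_iff_nonempty.mp hD)) w)) :
    ‖∏ d, ((1 - p d : ℂ) + p d * Complex.exp (Complex.I * ω * w d))‖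
      ≤ Real.exp (-(2 * (∑ d, p d * (1 - p d) * (w d) ^ 2) / Real.pi ^ 2) * ω ^ 2) := by
  have hne : (Finset.univ : Finset (Fin D)).Nonempty :=
    Finset.univ_nonempty_iff.mpr (Fin.pos_iff_nonempty.mp hD)
  set M := Finset.univ.sup' hne w with hM
  have hMpos : 0 < M := lt_of_lt_of_le (hw ⟨0, hD⟩) (Finset.le_sup' w (Finset.mem_univ _))
  have hbound : ∀ d, |ω * w d| ≤ Real.pi := by
    intro d
    have hwM : w d ≤ M := Finset.le_sup' w (Finset.mem_univ d)
    rw [abs_mul, abs_of_pos (hw d)]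
    calc |ω| * w d ≤ (Real.pi / M) * w d := by
          exact mul_le_mul_of_nonneg_right hω (hw d).le
      _ ≤ (Real.pi / M) * M := by
          apply mul_le_mul_of_nonneg_left hwM; positivity
      _ = Real.pi := by field_simp
  rw [norm_prod]
  calc ∏ d, ‖(1 - p d : ℂ) + p d * Complex.exp (Complex.I * ω * w d)‖
      ≤ ∏ d, Real.exp (-(2 * (p d * (1 - p d)) / Real.pi ^ 2) * (ω * w d) ^ 2) := by
        apply Finset.prod_le_prod (fun d _ => norm_nonneg _)
        intro d _
        have := wpb_factor_bound (p d) (ω * w d) (hp0 d) (hp1 d) (hbound d)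
        rw [show (Complex.I * ω * w d : ℂ) = Complex.I * ((ω * w d : ℝ) : ℂ) by push_cast; ring]
        exact this
    _ = Real.exp (∑ d, -(2 * (p d * (1 - p d)) / Real.pi ^ 2) * (ω * w d) ^ 2) :=
        (Real.exp_sum _ _).symm
    _ = Real.exp (-(2 * (∑ d, p d * (1 - p d) * (w d) ^ 2) / Real.pi ^ 2) * ω ^ 2) := by
        congr 1
        have hd : ∀ d : Fin D, -(2 * (p d * (1 - p d)) / Real.pi ^ 2) * (ω * w d) ^ 2
            = -(2 / Real.pi ^ 2) * (p d * (1 - p d) * w d ^ 2) * ω ^ 2 := fun d => by ring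
        simp only [hd]
        rw [← Finset.sum_mul, ← Finset.mul_sum]
        ring
end
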